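/- For all natural numbers h ≤ k: if μX.A is a formula of L0 with lev(μX.A) = h, then the sequent μX.A, (¬μX.A)' has a cut-free derivation in the system M^Ω_k. -/

import Mathlib

namespace OneVarMu

/-- Operator forms of the language `L_Ω` (one fixed variable `X`, written `var`).
`nut` is the auxiliary fixed-point connective `ν̃`; `L0` operator forms are the
`nut`-free ones. -/
inductive Form : Type
  | atom  : ℕ → Form          -- p_i
  | natom : ℕ → Form          -- p̄_i
  | var   : Form              -- X
  | and   : Form → Form → Form
  | or    : Form → Form → Form
  | box   : Form → Form
  | dia   : Form → Form
  | mu    : Form → Form       -- μX.A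
  | nu    : Form → Form       -- νX.A
  | nut   : Form → Form       -- ν̃X.A
  deriving DecidableEq

namespace Form

/-- Negation `¬A` (on `ν̃` we extend the `L0` definition as for `ν`). -/
def compl : Form → Form
  | atom i  => natom i
  | natom i => atom i
  | var     => var
  | and A B => or (compl A) (compl B)
  | or A B  => and (compl A) (compl B)
  | box A   => dia (compl A)
  | dia A   => box (compl A)
  | mu A    => nu (compl A)
  | nu A    => mu (compl A)
  | nut A   => mu (compl A)

/-- `subst A B` is `A(B)`: substitute `B` for every free occurrence of `X` in `A`. -/
def subst : Form → Form → Form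
  | atom i, _  => atom i
  | natom i, _ => natom i
  | var, B     => B
  | and A1 A2, B => and (subst A1 B) (subst A2 B)
  | or A1 A2, B  => or (subst A1 B) (subst A2 B)
  | box A, B   => box (subst A B)
  | dia A, B   => dia (subst A B)
  | mu A, _    => mu A
  | nu A, _    => nu A
  | nut A, _   => nut A

/-- The level of an operator form: maximal nesting of fixed-point operators. -/
def lev : Form → ℕ
  | atom _  => 0
  | natom _ => 0
  | var     => 0
  | and A B => max (lev A) (lev B)
  | or A B  => max (lev A) (lev B)
  | box A   => lev A
  | dia A   => lev A
  | mu A    => lev A + 1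
  | nu A    => lev A + 1
  | nut A   => lev A + 1

/-- `A'`: replace every occurrence of `νX` by `ν̃X`. -/
def prime : Form → Form
  | atom i  => atom i
  | natom i => natom i
  | var     => var
  | and A B => and (prime A) (prime B)
  | or A B  => or (prime A) (prime B)
  | box A   => box (prime A)
  | dia A   => dia (prime A)
  | mu A    => mu (prime A)
  | nu A    => nut (prime A)
  | nut A   => nut (prime A)

/-- `A` is an operator form of `L0`, i.e. contains no `ν̃`. -/
def IsL0 : Form → Prop
  | and A B => IsL0 A ∧ IsL0 B
  | or A B  => IsL0 A ∧ IsL0 B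
  | box A   => IsL0 A
  | dia A   => IsL0 A
  | mu A    => IsL0 A
  | nu A    => IsL0 A
  | nut _   => False
  | _       => True

/-- `A` has no free occurrence of the variable `X`, i.e. `A` is a formula. -/
def ClosedF : Form → Prop
  | var     => False
  | and A B => ClosedF A ∧ ClosedF B
  | or A B  => ClosedF A ∧ ClosedF B
  | box A   => ClosedF A
  | dia A   => ClosedF A
  | _       => True

/-- `⊤ := p ∨ p̄` for a fixed atomic proposition. -/
def top : Form := or (atom 0) (natom 0)

/-- Finite iterations `A^i(⊤)`. -/
def iter (A : Form) : ℕ → Form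
  | 0     => top
  | n + 1 => subst A (iter A n)

/-- `OccursIn A B`: the operator form `A` occurs (as a subterm) in `B`. -/
def OccursIn (A : Form) : Form → Prop
  | atom i  => A = atom i
  | natom i => A = natom i
  | var     => A = var
  | and C D => A = and C D ∨ OccursIn A C ∨ OccursIn A D
  | or C D  => A = or C D ∨ OccursIn A C ∨ OccursIn A D
  | box C   => A = box C ∨ OccursIn A C
  | dia C   => A = dia C ∨ OccursIn A C
  | mu C    => A = mu C ∨ OccursIn A C
  | nu C    => A = nu C ∨ OccursIn A C
  | nut C   => A = nut C ∨ OccursIn A C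

/-- `replace t r A`: simultaneously replace every occurrence of `t` in `A` by `r`. -/
def replace (t r : Form) : Form → Form
  | and A B => if and A B = t then r else and (replace t r A) (replace t r B)
  | or A B  => if or A B = t then r else or (replace t r A) (replace t r B)
  | box A   => if box A = t then r else box (replace t r A)
  | dia A   => if dia A = t then r else dia (replace t r A)
  | mu A    => if mu A = t then r else mu (replace t r A)
  | nu A    => if nu A = t then r else nu (replace t r A)
  | nut A   => if nut A = t then r else nut (replace t r A)
  | A       => if A = t then r else A

end Form

/-- Sequents are finite sets of formulae. -/
abbrev Sequent := Finset Form

/-- Every member is a formula (no free `X`): a sequent of `L_Ω`. -/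
def ClosedSeq (Γ : Sequent) : Prop := ∀ C ∈ Γ, C.ClosedF

/-- A sequent of `L0`: every member is a `ν̃`-free formula. -/
def L0Seq (Γ : Sequent) : Prop := ∀ C ∈ Γ, C.IsL0 ∧ C.ClosedF

/-- `Γ` is `h`-positive: every `ν̃X.A` occurring in it has level `< h`. -/
def Positive (h : ℕ) (Γ : Sequent) : Prop :=
  ∀ C ∈ Γ, ∀ B : Form, Form.OccursIn (Form.nut B) C → Form.lev (Form.nut B) < h

/-- Every formula of the sequent has level `≤ k`. -/
def SeqLevLE (k : ℕ) (Γ : Sequent) : Prop := ∀ C ∈ Γ, C.lev ≤ k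

/-- The infinitary cut-free system `K_ω`. -/
inductive KDer : Sequent → Prop
  | ax (Γ : Sequent) (i : ℕ) :
      KDer (insert (Form.atom i) (insert (Form.natom i) Γ))
  | orR (Γ : Sequent) (A B : Form) :
      KDer (insert A (insert B Γ)) → KDer (insert (Form.or A B) Γ)
  | andR (Γ : Sequent) (A B : Form) :
      KDer (insert A Γ) → KDer (insert B Γ) → KDer (insert (Form.and A B) Γ)
  | boxR (Γ S : Sequent) (A : Form) :
      KDer (insert A Γ) → KDer (Γ.image Form.dia ∪ insert (Form.box A) S)
  | clo (Γ : Sequent) (A : Form) :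
      KDer (insert (Form.subst A (Form.mu A)) Γ) → KDer (insert (Form.mu A) Γ)
  | nuR (Γ : Sequent) (A : Form) :
      (∀ i : ℕ, KDer (insert (Form.iter A i) Γ)) → KDer (insert (Form.nu A) Γ)

/-- The finitary system `M` (with induction rule and cut). -/
inductive MDer : Sequent → Prop
  | ax (Γ : Sequent) (i : ℕ) :
      MDer (insert (Form.atom i) (insert (Form.natom i) Γ))
  | axMu (Γ : Sequent) (A : Form) :
      MDer (insert (Form.mu A) (insert (Form.compl (Form.mu A)) Γ))
  | orR (Γ : Sequent) (A B : Form) :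
      MDer (insert A (insert B Γ)) → MDer (insert (Form.or A B) Γ)
  | andR (Γ : Sequent) (A B : Form) :
      MDer (insert A Γ) → MDer (insert B Γ) → MDer (insert (Form.and A B) Γ)
  | boxR (Γ S : Sequent) (A : Form) :
      MDer (insert A Γ) → MDer (Γ.image Form.dia ∪ insert (Form.box A) S)
  | clo (Γ : Sequent) (A : Form) :
      MDer (insert (Form.subst A (Form.mu A)) Γ) → MDer (insert (Form.mu A) Γ)
  | ind (A B : Form) :
      MDer (insert (Form.compl (Form.subst A B)) {B}) →
      MDer (insert (Form.compl (Form.mu A)) {B})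
  | cut (Γ : Sequent) (A : Form) :
      A.IsL0 → A.ClosedF →
      MDer (insert A Γ) → MDer (insert (Form.compl A) Γ) → MDer Γ

/-- The finitary system `M`, with the extra recording that every sequent occurring
in the proof (i.e. the conclusion of every subderivation) has level `≤ k`. -/
inductive MDerB (k : ℕ) : Sequent → Prop
  | ax (Γ : Sequent) (i : ℕ) :
      SeqLevLE k (insert (Form.atom i) (insert (Form.natom i) Γ)) →
      MDerB k (insert (Form.atom i) (insert (Form.natom i) Γ))
  | axMu (Γ : Sequent) (A : Form) :
      SeqLevLE k (insert (Form.mu A) (insert (Form.compl (Form.mu A)) Γ)) →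
      MDerB k (insert (Form.mu A) (insert (Form.compl (Form.mu A)) Γ))
  | orR (Γ : Sequent) (A B : Form) :
      SeqLevLE k (insert (Form.or A B) Γ) →
      MDerB k (insert A (insert B Γ)) → MDerB k (insert (Form.or A B) Γ)
  | andR (Γ : Sequent) (A B : Form) :
      SeqLevLE k (insert (Form.and A B) Γ) →
      MDerB k (insert A Γ) → MDerB k (insert B Γ) → MDerB k (insert (Form.and A B) Γ)
  | boxR (Γ S : Sequent) (A : Form) :
      SeqLevLE k (Γ.image Form.dia ∪ insert (Form.box A) S) →
      MDerB k (insert A Γ) → MDerB k (Γ.image Form.dia ∪ insert (Form.box A) S)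
  | clo (Γ : Sequent) (A : Form) :
      SeqLevLE k (insert (Form.mu A) Γ) →
      MDerB k (insert (Form.subst A (Form.mu A)) Γ) → MDerB k (insert (Form.mu A) Γ)
  | ind (A B : Form) :
      SeqLevLE k (insert (Form.compl (Form.mu A)) {B}) →
      MDerB k (insert (Form.compl (Form.subst A B)) {B}) →
      MDerB k (insert (Form.compl (Form.mu A)) {B})
  | cut (Γ : Sequent) (A : Form) :
      A.IsL0 → A.ClosedF → SeqLevLE k Γ →
      MDerB k (insert A Γ) → MDerB k (insert (Form.compl A) Γ) → MDerB k Γ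

/-- Derivations of the system `M^Ω_k`, relative to a predicate `prev` expressing
cut-free derivability in `M^Ω_{k-1}`.  The boolean index is `true` if instances
of cut are allowed and `false` for cut-free derivations. -/
inductive OmDerAux (prev : Sequent → Prop) (k : ℕ) : Bool → Sequent → Prop
  | ax (c : Bool) (Γ : Sequent) (i : ℕ) :
      OmDerAux prev k c (insert (Form.atom i) (insert (Form.natom i) Γ))
  | orR (c : Bool) (Γ : Sequent) (A B : Form) :
      OmDerAux prev k c (insert A (insert B Γ)) →
      OmDerAux prev k c (insert (Form.or A B) Γ)
  | andR (c : Bool) (Γ : Sequent) (A B : Form) :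
      OmDerAux prev k c (insert A Γ) → OmDerAux prev k c (insert B Γ) →
      OmDerAux prev k c (insert (Form.and A B) Γ)
  | boxR (c : Bool) (Γ S : Sequent) (A : Form) :
      OmDerAux prev k c (insert A Γ) →
      OmDerAux prev k c (Γ.image Form.dia ∪ insert (Form.box A) S)
  | clo (c : Bool) (Γ : Sequent) (A : Form) :
      OmDerAux prev k c (insert (Form.subst A (Form.mu A)) Γ) →
      OmDerAux prev k c (insert (Form.mu A) Γ)
  | nuR (c : Bool) (Γ : Sequent) (A : Form) :
      (∀ i : ℕ, OmDerAux prev k c (insert (Form.iter A i) Γ)) →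
      OmDerAux prev k c (insert (Form.nu A) Γ)
  | cut (Γ : Sequent) (A : Form) :
      A.IsL0 → A.ClosedF → A.lev ≤ k →
      OmDerAux prev k true (insert (Form.prime A) Γ) →
      OmDerAux prev k true (insert (Form.prime (Form.compl A)) Γ) →
      OmDerAux prev k true Γ
  | omega (c : Bool) (Γ : Sequent) (A : Form) (h : ℕ) :
      1 ≤ h → h ≤ k → A.IsL0 →
      Form.lev (Form.prime (Form.compl (Form.mu A))) = h →
      (∀ Δ : Sequent, ClosedSeq Δ → Positive h Δ →
        prev (insert (Form.prime (Form.mu A)) Δ) → OmDerAux prev k c (Δ ∪ Γ)) →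
      OmDerAux prev k c (insert (Form.prime (Form.compl (Form.mu A))) Γ)
  | omegaT (c : Bool) (Γ : Sequent) (A : Form) (h : ℕ) :
      1 ≤ h → h ≤ k → A.IsL0 →
      Form.lev (Form.prime (Form.compl (Form.mu A))) = h →
      OmDerAux prev k c (insert (Form.prime (Form.mu A)) Γ) →
      (∀ Δ : Sequent, ClosedSeq Δ → Positive h Δ →
        prev (insert (Form.prime (Form.mu A)) Δ) → OmDerAux prev k c (Δ ∪ Γ)) →
      OmDerAux prev k c Γ

/-- `OmProv k c Γ`: the sequent `Γ` is derivable in `M^Ω_k`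
(cut-free when `c = false`). -/
def OmProv : ℕ → Bool → Sequent → Prop
  | 0     => OmDerAux (fun _ => False) 0
  | k + 1 => OmDerAux (fun Δ => OmProv k false Δ) (k + 1)



----------------------------------------------------------------
-- Auxiliary development
----------------------------------------------------------------

namespace Form

theorem prime_subst (A B : Form) :
    prime (subst A B) = subst (prime A) (prime B) := by
  induction A <;> simp [subst, prime, *]

theorem compl_subst (A B : Form) :
    compl (subst A B) = subst (compl A) (compl B) := by
  induction A <;> simp [subst, compl, *]

theorem compl_compl (A : Form) (h : IsL0 A) : compl (compl A) = A := by
  induction A <;> simp_all [compl, IsL0]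

theorem closed_subst (A B : Form) (hB : ClosedF B) : ClosedF (subst A B) := by
  induction A <;> simp_all [subst, ClosedF]

theorem isL0_subst (A B : Form) (hA : IsL0 A) (hB : IsL0 B) :
    IsL0 (subst A B) := by
  induction A <;> simp_all [subst, IsL0]

theorem isL0_compl (A : Form) (hA : IsL0 A) : IsL0 (compl A) := by
  induction A <;> simp_all [compl, IsL0]

theorem closed_prime (A : Form) (hA : ClosedF A) : ClosedF (prime A) := by
  induction A <;> simp_all [prime, ClosedF]

theorem lev_prime (A : Form) : lev (prime A) = lev A := by
  induction A <;> simp [prime, lev, *]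

theorem lev_compl (A : Form) : lev (compl A) = lev A := by
  induction A <;> simp [compl, lev, *]

theorem lev_subst (A B : Form) : lev (subst A B) ≤ max (lev A) (lev B) := by
  induction A <;> simp [subst, lev, *] <;> omega

theorem lev_iter (A : Form) (i : ℕ) : lev (iter A i) ≤ lev A := by
  induction i with
  | zero => simp [iter, top, lev]
  | succ i ih =>
    have := lev_subst A (iter A i)
    simp only [iter]
    omega

theorem closed_iter (A : Form) (i : ℕ) : ClosedF (iter A i) := by
  induction i with
  | zero => simp [iter, top, ClosedF]
  | succ i ih => exact closed_subst _ _ ih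

theorem isL0_iter (A : Form) (hA : IsL0 A) (i : ℕ) : IsL0 (iter A i) := by
  induction i with
  | zero => simp [iter, top, IsL0]
  | succ i ih => exact isL0_subst _ _ hA ih

theorem occurs_nut_subst {B A C : Form} :
    OccursIn (nut B) (subst A C) → OccursIn (nut B) A ∨ OccursIn (nut B) C := by
  induction A <;> simp_all [subst, OccursIn] <;> tauto

theorem occurs_nut_prime {B : Form} : ∀ {G : Form}, IsL0 G →
    OccursIn (nut B) (prime G) → lev (nut B) ≤ lev G := by
  intro G
  induction G with
  | atom i => intro _ hocc; simp [prime, OccursIn] at hocc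
  | natom i => intro _ hocc; simp [prime, OccursIn] at hocc
  | var => intro _ hocc; simp [prime, OccursIn] at hocc
  | and G₁ G₂ ih₁ ih₂ =>
    intro hG hocc
    obtain ⟨hg1, hg2⟩ := hG
    have e : lev (and G₁ G₂) = max (lev G₁) (lev G₂) := rfl
    simp only [prime, OccursIn] at hocc
    rcases hocc with h | h | h
    · exact absurd h (by simp)
    · have := ih₁ hg1 h; omega
    · have := ih₂ hg2 h; omega
  | or G₁ G₂ ih₁ ih₂ =>
    intro hG hocc
    obtain ⟨hg1, hg2⟩ := hG
    have e : lev (or G₁ G₂) = max (lev G₁) (lev G₂) := rfl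
    simp only [prime, OccursIn] at hocc
    rcases hocc with h | h | h
    · exact absurd h (by simp)
    · have := ih₁ hg1 h; omega
    · have := ih₂ hg2 h; omega
  | box G₁ ih =>
    intro hG hocc
    simp only [prime, OccursIn] at hocc
    rcases hocc with h | h
    · exact absurd h (by simp)
    · exact ih hG h
  | dia G₁ ih =>
    intro hG hocc
    simp only [prime, OccursIn] at hocc
    rcases hocc with h | h
    · exact absurd h (by simp)
    · exact ih hG h
  | mu G₁ ih =>
    intro hG hocc
    have e : lev (mu G₁) = lev G₁ + 1 := rfl
    simp only [prime, OccursIn] at hocc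
    rcases hocc with h | h
    · exact absurd h (by simp)
    · have := ih hG h; omega
  | nu G₁ ih =>
    intro hG hocc
    have e : lev (nu G₁) = lev G₁ + 1 := rfl
    simp only [prime, OccursIn] at hocc
    rcases hocc with h | h
    · have : B = prime G₁ := by injection h
      subst this
      have e2 : lev (nut (prime G₁)) = lev (prime G₁) + 1 := rfl
      rw [e2, lev_prime G₁]; omega
    · have := ih hG h; omega
  | nut G₁ ih => intro hG _; exact hG.elim

theorem occurs_nut_iter {B A : Form} {i : ℕ} :
    OccursIn (nut B) (iter A i) → OccursIn (nut B) A := by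
  induction i with
  | zero => intro h; simp [iter, top, OccursIn] at h
  | succ i ih =>
    intro h
    rcases occurs_nut_subst h with h | h
    · exact h
    · exact ih h

theorem prime_eq_atom {G : Form} {i : ℕ} (h : prime G = atom i) : G = atom i := by
  cases G <;> simp_all [prime]

theorem prime_eq_natom {G : Form} {i : ℕ} (h : prime G = natom i) : G = natom i := by
  cases G <;> simp_all [prime]

theorem prime_eq_and {G A B : Form} (h : prime G = and A B) :
    ∃ G₁ G₂, G = and G₁ G₂ ∧ prime G₁ = A ∧ prime G₂ = B := by
  cases G <;> simp_all [prime]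

theorem prime_eq_or {G A B : Form} (h : prime G = or A B) :
    ∃ G₁ G₂, G = or G₁ G₂ ∧ prime G₁ = A ∧ prime G₂ = B := by
  cases G <;> simp_all [prime]

theorem prime_eq_box {G A : Form} (h : prime G = box A) :
    ∃ G₁, G = box G₁ ∧ prime G₁ = A := by
  cases G <;> simp_all [prime]

theorem prime_eq_dia {G A : Form} (h : prime G = dia A) :
    ∃ G₁, G = dia G₁ ∧ prime G₁ = A := by
  cases G <;> simp_all [prime]

theorem prime_eq_mu {G A : Form} (h : prime G = mu A) :
    ∃ G₁, G = mu G₁ ∧ prime G₁ = A := by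
  cases G <;> simp_all [prime]

theorem prime_eq_nu {G A : Form} (h : prime G = nu A) : False := by
  cases G <;> simp_all [prime]

theorem prime_eq_nut {G A : Form} (hG : IsL0 G) (h : prime G = nut A) :
    ∃ G₁, G = nu G₁ ∧ prime G₁ = A := by
  cases G <;> simp_all [prime, IsL0]

/-- Remove all primes (`ν̃ ↦ ν`). -/
def unprime : Form → Form
  | atom i  => atom i
  | natom i => natom i
  | var     => var
  | and A B => and (unprime A) (unprime B)
  | or A B  => or (unprime A) (unprime B)
  | box A   => box (unprime A)
  | dia A   => dia (unprime A)
  | mu A    => mu (unprime A)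
  | nu A    => nu (unprime A)
  | nut A   => nu (unprime A)

theorem unprime_prime (G : Form) (hG : IsL0 G) : unprime (prime G) = G := by
  induction G <;> simp_all [prime, unprime, IsL0]

theorem prime_inj {G₁ G₂ : Form} (h1 : IsL0 G₁) (h2 : IsL0 G₂)
    (he : prime G₁ = prime G₂) : G₁ = G₂ := by
  rw [← unprime_prime G₁ h1, ← unprime_prime G₂ h2, he]

end Form

open Form

theorem closedSeq_insert {A : Form} {Γ : Sequent} :
    ClosedSeq (insert A Γ) ↔ ClosedF A ∧ ClosedSeq Γ := by
  simp [ClosedSeq]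

theorem closedSeq_union {Γ Δ : Sequent} :
    ClosedSeq (Γ ∪ Δ) ↔ ClosedSeq Γ ∧ ClosedSeq Δ := by
  simp [ClosedSeq, or_imp, forall_and]

/-- Every `ν̃`-subformula of a member of `Γ` has level `≤ b`. -/
def BndSeq (b : ℕ) (Γ : Sequent) : Prop :=
  ∀ C ∈ Γ, ∀ B : Form, OccursIn (nut B) C → lev (nut B) ≤ b

theorem bndSeq_insert {b : ℕ} {A : Form} {Γ : Sequent} :
    BndSeq b (insert A Γ) ↔
      (∀ B : Form, OccursIn (nut B) A → lev (nut B) ≤ b) ∧ BndSeq b Γ := by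
  simp [BndSeq]

theorem bndSeq_union {b : ℕ} {Γ Δ : Sequent} :
    BndSeq b (Γ ∪ Δ) ↔ BndSeq b Γ ∧ BndSeq b Δ := by
  simp [BndSeq, or_imp, forall_and]

/-- Covering relation: every member of `Σ` is in `T`, or is the priming of an
`L0` member of `T`. -/
def Cover (S T : Sequent) : Prop :=
  ∀ x ∈ S, x ∈ T ∨ ∃ G, IsL0 G ∧ x = prime G ∧ G ∈ T

theorem Cover.mono {S T T' : Sequent} (h : Cover S T) (hT : T ⊆ T') :
    Cover S T' := by
  intro x hx
  rcases h x hx with h' | ⟨G, h1, h2, h3⟩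
  · exact Or.inl (hT h')
  · exact Or.inr ⟨G, h1, h2, hT h3⟩

theorem Cover.id (S : Sequent) : Cover S S := fun x hx => Or.inl hx

theorem OmDerAux.cast {prev : Sequent → Prop} {k : ℕ} {c : Bool} {Γ Γ' : Sequent}
    (d : OmDerAux prev k c Γ) (h : Γ = Γ') : OmDerAux prev k c Γ' := h ▸ d

/-- Weakening. -/
theorem weak {prev : Sequent → Prop} {k : ℕ} :
    ∀ {c : Bool} {Γ : Sequent}, OmDerAux prev k c Γ →
      ∀ {Γ' : Sequent}, Γ ⊆ Γ' → OmDerAux prev k c Γ' := by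
  intro c Γ d
  induction d with
  | ax c Γ i =>
    intro Γ' hs
    have h1 : Form.atom i ∈ Γ' := hs (Finset.mem_insert_self _ _)
    have h2 : Form.natom i ∈ Γ' :=
      hs (Finset.mem_insert_of_mem (Finset.mem_insert_self _ _))
    exact (OmDerAux.ax c Γ' i).cast
      (by rw [Finset.insert_eq_self.mpr h2, Finset.insert_eq_self.mpr h1])
  | orR c Γ A B d1 ih1 =>
    intro Γ' hs
    have hm : Form.or A B ∈ Γ' := hs (Finset.mem_insert_self _ _)
    have hsub : insert A (insert B Γ) ⊆ insert A (insert B Γ') := by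
      intro x hx
      simp only [Finset.mem_insert] at hx ⊢
      rcases hx with h | h | h
      · exact Or.inl h
      · exact Or.inr (Or.inl h)
      · exact Or.inr (Or.inr (hs (Finset.mem_insert_of_mem h)))
    exact (OmDerAux.orR c Γ' A B (ih1 hsub)).cast (Finset.insert_eq_self.mpr hm)
  | andR c Γ A B d1 d2 ih1 ih2 =>
    intro Γ' hs
    have hm : Form.and A B ∈ Γ' := hs (Finset.mem_insert_self _ _)
    have hsub : ∀ X : Form, insert X Γ ⊆ insert X Γ' := by
      intro X x hx
      simp only [Finset.mem_insert] at hx ⊢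
      rcases hx with h | h
      · exact Or.inl h
      · exact Or.inr (hs (Finset.mem_insert_of_mem h))
    exact (OmDerAux.andR c Γ' A B (ih1 (hsub A)) (ih2 (hsub B))).cast
      (Finset.insert_eq_self.mpr hm)
  | boxR c Γ S A d1 ih1 =>
    intro Γ' hs
    have hm : Form.box A ∈ Γ' :=
      hs (Finset.mem_union_right _ (Finset.mem_insert_self _ _))
    have him : Γ.image Form.dia ⊆ Γ' := fun x hx =>
      hs (Finset.mem_union_left _ hx)
    refine (OmDerAux.boxR c Γ Γ' A d1).cast ?_
    rw [Finset.insert_eq_self.mpr hm]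
    exact Finset.union_eq_right.mpr him
  | clo c Γ A d1 ih1 =>
    intro Γ' hs
    have hm : Form.mu A ∈ Γ' := hs (Finset.mem_insert_self _ _)
    have hsub : insert (Form.subst A (Form.mu A)) Γ ⊆
        insert (Form.subst A (Form.mu A)) Γ' := by
      intro x hx
      simp only [Finset.mem_insert] at hx ⊢
      rcases hx with h | h
      · exact Or.inl h
      · exact Or.inr (hs (Finset.mem_insert_of_mem h))
    exact (OmDerAux.clo c Γ' A (ih1 hsub)).cast (Finset.insert_eq_self.mpr hm)
  | nuR c Γ A hp ihp =>
    intro Γ' hs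
    have hm : Form.nu A ∈ Γ' := hs (Finset.mem_insert_self _ _)
    have hsub : ∀ i : ℕ, insert (Form.iter A i) Γ ⊆ insert (Form.iter A i) Γ' := by
      intro i x hx
      simp only [Finset.mem_insert] at hx ⊢
      rcases hx with h | h
      · exact Or.inl h
      · exact Or.inr (hs (Finset.mem_insert_of_mem h))
    exact (OmDerAux.nuR c Γ' A (fun i => ihp i (hsub i))).cast
      (Finset.insert_eq_self.mpr hm)
  | cut Γ A hA hcl hlev d1 d2 ih1 ih2 =>
    intro Γ' hs
    have hsub : ∀ X : Form, insert X Γ ⊆ insert X Γ' := by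
      intro X x hx
      simp only [Finset.mem_insert] at hx ⊢
      rcases hx with h | h
      · exact Or.inl h
      · exact Or.inr (hs h)
    exact OmDerAux.cut Γ' A hA hcl hlev (ih1 (hsub _)) (ih2 (hsub _))
  | omega c Γ A h h1 h2 hA hl hp ihp =>
    intro Γ' hs
    have hm : Form.prime (Form.compl (Form.mu A)) ∈ Γ' :=
      hs (Finset.mem_insert_self _ _)
    refine (OmDerAux.omega c Γ' A h h1 h2 hA hl ?_).cast
      (Finset.insert_eq_self.mpr hm)
    intro Δ hc hp' hd
    refine ihp Δ hc hp' hd ?_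
    intro x hx
    rcases Finset.mem_union.mp hx with h' | h'
    · exact Finset.mem_union.mpr (Or.inl h')
    · exact Finset.mem_union.mpr (Or.inr (hs (Finset.mem_insert_of_mem h')))
  | omegaT c Γ A h h1 h2 hA hl d1 hp ih1 ihp =>
    intro Γ' hs
    refine OmDerAux.omegaT c Γ' A h h1 h2 hA hl ?_ ?_
    · refine ih1 ?_
      intro x hx
      simp only [Finset.mem_insert] at hx ⊢
      rcases hx with h' | h'
      · exact Or.inl h'
      · exact Or.inr (hs h')
    · intro Δ hc hp' hd
      refine ihp Δ hc hp' hd ?_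
      intro x hx
      rcases Finset.mem_union.mp hx with h' | h'
      · exact Finset.mem_union.mpr (Or.inl h')
      · exact Finset.mem_union.mpr (Or.inr (hs h'))



theorem Cover.tail {A : Form} {S T : Sequent} (cov : Cover (insert A S) T) :
    Cover S T := fun x hx => cov x (Finset.mem_insert_of_mem hx)

theorem OmProv_weak {n : ℕ} {Γ Γ' : Sequent} (d : OmProv n false Γ)
    (hs : Γ ⊆ Γ') : OmProv n false Γ' := by
  cases n with
  | zero => exact weak d hs
  | succ j => exact weak d hs

theorem OmProv_cast {n : ℕ} {c : Bool} {Γ Γ' : Sequent} (d : OmProv n c Γ)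
    (h : Γ = Γ') : OmProv n c Γ' := h ▸ d

theorem OmProv_ax (n : ℕ) (Γ : Sequent) (i : ℕ) :
    OmProv n false (insert (Form.atom i) (insert (Form.natom i) Γ)) := by
  cases n with
  | zero => exact OmDerAux.ax false Γ i
  | succ j => exact OmDerAux.ax false Γ i

theorem OmProv_orR {n : ℕ} {Γ : Sequent} {A B : Form}
    (d : OmProv n false (insert A (insert B Γ))) :
    OmProv n false (insert (Form.or A B) Γ) := by
  cases n with
  | zero => exact OmDerAux.orR false Γ A B d
  | succ j => exact OmDerAux.orR false Γ A B d

theorem OmProv_andR {n : ℕ} {Γ : Sequent} {A B : Form}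
    (d1 : OmProv n false (insert A Γ)) (d2 : OmProv n false (insert B Γ)) :
    OmProv n false (insert (Form.and A B) Γ) := by
  cases n with
  | zero => exact OmDerAux.andR false Γ A B d1 d2
  | succ j => exact OmDerAux.andR false Γ A B d1 d2

theorem OmProv_boxR {n : ℕ} {Γ : Sequent} (S : Sequent) {A : Form}
    (d : OmProv n false (insert A Γ)) :
    OmProv n false (Γ.image Form.dia ∪ insert (Form.box A) S) := by
  cases n with
  | zero => exact OmDerAux.boxR false Γ S A d
  | succ j => exact OmDerAux.boxR false Γ S A d

theorem OmProv_clo {n : ℕ} {Γ : Sequent} {A : Form}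
    (d : OmProv n false (insert (Form.subst A (Form.mu A)) Γ)) :
    OmProv n false (insert (Form.mu A) Γ) := by
  cases n with
  | zero => exact OmDerAux.clo false Γ A d
  | succ j => exact OmDerAux.clo false Γ A d

theorem OmProv_nuR {n : ℕ} {Γ : Sequent} {A : Form}
    (d : ∀ i : ℕ, OmProv n false (insert (Form.iter A i) Γ)) :
    OmProv n false (insert (Form.nu A) Γ) := by
  cases n with
  | zero => exact OmDerAux.nuR false Γ A d
  | succ j => exact OmDerAux.nuR false Γ A d

/-- Main transfer lemma: a cut-free derivation at level `m` can be transformed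
into one at level `m+1` of any sequent covering it. -/
theorem trans_aux {prev prev' : Sequent → Prop} {m : ℕ}
    (O1 : ∀ (C : Form) (Δ' : Sequent), IsL0 C → 1 ≤ lev (mu C) → lev (mu C) ≤ m →
      ClosedSeq Δ' → Positive (lev (mu C)) Δ' →
      prev' (insert (prime (mu C)) Δ') → prev (insert (prime (mu C)) Δ'))
    (O2 : ∀ (C : Form) (i : ℕ), IsL0 C → 1 ≤ lev (mu C) → lev (mu C) ≤ m →
      prev (insert (prime (mu C)) {prime (iter (compl C) i)})) :
    ∀ {c : Bool} {X : Sequent}, OmDerAux prev m c X → c = false →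
      ∀ T : Sequent, Cover X T → OmDerAux prev' (m + 1) false T := by
  intro c X d
  induction d with
  | ax c Γ i =>
    intro _ T cov
    have ha : Form.atom i ∈ T := by
      rcases cov _ (Finset.mem_insert_self _ _) with h | ⟨G, _, he, hGT⟩
      · exact h
      · rw [prime_eq_atom he.symm] at hGT; exact hGT
    have hb : Form.natom i ∈ T := by
      rcases cov _ (Finset.mem_insert_of_mem (Finset.mem_insert_self _ _)) with
        h | ⟨G, _, he, hGT⟩
      · exact h
      · rw [prime_eq_natom he.symm] at hGT; exact hGT
    exact (OmDerAux.ax false T i).cast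
      (by rw [Finset.insert_eq_self.mpr hb, Finset.insert_eq_self.mpr ha])
  | orR c Γ A B d1 ih1 =>
    intro hc T cov
    rcases cov _ (Finset.mem_insert_self _ _) with hT | ⟨G, hG0, he, hGT⟩
    · have covp : Cover (insert A (insert B Γ)) (insert A (insert B T)) := by
        intro x hx
        rcases Finset.mem_insert.mp hx with rfl | hx
        · exact Or.inl (Finset.mem_insert_self _ _)
        rcases Finset.mem_insert.mp hx with rfl | hx
        · exact Or.inl (Finset.mem_insert_of_mem (Finset.mem_insert_self _ _))
        · exact ((Cover.tail cov).mono
            ((Finset.subset_insert _ _).trans (Finset.subset_insert _ _))) x hx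
      exact (OmDerAux.orR false T A B (ih1 hc _ covp)).cast
        (Finset.insert_eq_self.mpr hT)
    · obtain ⟨G₁, G₂, rfl, hp1, hp2⟩ := prime_eq_or he.symm
      obtain ⟨hg1, hg2⟩ := hG0
      have covp : Cover (insert A (insert B Γ)) (insert G₁ (insert G₂ T)) := by
        intro x hx
        rcases Finset.mem_insert.mp hx with rfl | hx
        · exact Or.inr ⟨G₁, hg1, hp1.symm, Finset.mem_insert_self _ _⟩
        rcases Finset.mem_insert.mp hx with rfl | hx
        · exact Or.inr ⟨G₂, hg2, hp2.symm,
            Finset.mem_insert_of_mem (Finset.mem_insert_self _ _)⟩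
        · exact ((Cover.tail cov).mono
            ((Finset.subset_insert _ _).trans (Finset.subset_insert _ _))) x hx
      exact (OmDerAux.orR false T G₁ G₂ (ih1 hc _ covp)).cast
        (Finset.insert_eq_self.mpr hGT)
  | andR c Γ A B d1 d2 ih1 ih2 =>
    intro hc T cov
    rcases cov _ (Finset.mem_insert_self _ _) with hT | ⟨G, hG0, he, hGT⟩
    · have covp : ∀ Y : Form, Cover (insert Y Γ) (insert Y T) := by
        intro Y x hx
        rcases Finset.mem_insert.mp hx with rfl | hx
        · exact Or.inl (Finset.mem_insert_self _ _)
        · exact ((Cover.tail cov).mono (Finset.subset_insert _ _)) x hx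
      exact (OmDerAux.andR false T A B (ih1 hc _ (covp A)) (ih2 hc _ (covp B))).cast
        (Finset.insert_eq_self.mpr hT)
    · obtain ⟨G₁, G₂, rfl, hp1, hp2⟩ := prime_eq_and he.symm
      obtain ⟨hg1, hg2⟩ := hG0
      have covp : ∀ (Y Z : Form), IsL0 Z → prime Z = Y →
          Cover (insert Y Γ) (insert Z T) := by
        intro Y Z hZ hpe x hx
        rcases Finset.mem_insert.mp hx with rfl | hx
        · exact Or.inr ⟨Z, hZ, hpe.symm, Finset.mem_insert_self _ _⟩
        · exact ((Cover.tail cov).mono (Finset.subset_insert _ _)) x hx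
      exact (OmDerAux.andR false T G₁ G₂ (ih1 hc _ (covp A G₁ hg1 hp1))
        (ih2 hc _ (covp B G₂ hg2 hp2))).cast (Finset.insert_eq_self.mpr hGT)
  | boxR c Γ Sx A d1 ih1 =>
    intro hc T cov
    classical
    have hbox := cov _ (Finset.mem_union_right _ (Finset.mem_insert_self _ _))
    set f : Form → Form := fun y =>
      if Form.dia y ∈ T then y
      else if h2 : ∃ z, IsL0 z ∧ prime z = y ∧ Form.dia z ∈ T then h2.choose
      else y with hf
    have Hf : ∀ y ∈ Γ, Form.dia (f y) ∈ T ∧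
        (f y = y ∨ (IsL0 (f y) ∧ y = prime (f y))) := by
      intro y hy
      have hcy := cov _ (Finset.mem_union_left _ (Finset.mem_image_of_mem Form.dia hy))
      by_cases hdy : Form.dia y ∈ T
      · simp only [hf, if_pos hdy]
        exact ⟨hdy, Or.inl trivial⟩
      · rcases hcy with h | ⟨G, hG0, he, hGT⟩
        · exact absurd h hdy
        · obtain ⟨G₃, rfl, hp3⟩ := prime_eq_dia he.symm
          have hex : ∃ z, IsL0 z ∧ prime z = y ∧ Form.dia z ∈ T := ⟨G₃, hG0, hp3, hGT⟩
          simp only [hf, if_neg hdy, dif_pos hex]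
          obtain ⟨z1, z2, z3⟩ := hex.choose_spec
          exact ⟨z3, Or.inr ⟨z1, z2.symm⟩⟩
    have hcovΓ : ∀ Y : Form, Y ∈ insert Y (Γ.image f) →
        Cover (insert A Γ) (insert Y (Γ.image f)) → True := fun _ _ _ => trivial
    have covtail : ∀ (Y : Form), ∀ x ∈ Γ, x ∈ insert Y (Γ.image f) ∨
        ∃ G, IsL0 G ∧ x = prime G ∧ G ∈ insert Y (Γ.image f) := by
      intro Y x hx
      rcases (Hf x hx).2 with hfy | ⟨hL, hpe⟩
      · exact Or.inl (Finset.mem_insert_of_mem (hfy ▸ Finset.mem_image_of_mem f hx))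
      · exact Or.inr ⟨f x, hL, hpe, Finset.mem_insert_of_mem (Finset.mem_image_of_mem f hx)⟩
    have himg : (Γ.image f).image Form.dia ⊆ T := by
      intro x hx
      obtain ⟨y2, hy2, rfl⟩ := Finset.mem_image.mp hx
      obtain ⟨y, hy, rfl⟩ := Finset.mem_image.mp hy2
      exact (Hf y hy).1
    rcases hbox with hbT | ⟨G, hG0, he, hGT⟩
    · have covp : Cover (insert A Γ) (insert A (Γ.image f)) := by
        intro x hx
        rcases Finset.mem_insert.mp hx with rfl | hx
        · exact Or.inl (Finset.mem_insert_self _ _)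
        · exact covtail A x hx
      refine (OmDerAux.boxR false (Γ.image f) T A (ih1 hc _ covp)).cast ?_
      rw [Finset.insert_eq_self.mpr hbT]
      exact Finset.union_eq_right.mpr himg
    · obtain ⟨G₁, rfl, hp1⟩ := prime_eq_box he.symm
      have covp : Cover (insert A Γ) (insert G₁ (Γ.image f)) := by
        intro x hx
        rcases Finset.mem_insert.mp hx with rfl | hx
        · exact Or.inr ⟨G₁, hG0, hp1.symm, Finset.mem_insert_self _ _⟩
        · exact covtail G₁ x hx
      refine (OmDerAux.boxR false (Γ.image f) T G₁ (ih1 hc _ covp)).cast ?_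
      rw [Finset.insert_eq_self.mpr hGT]
      exact Finset.union_eq_right.mpr himg
  | clo c Γ A d1 ih1 =>
    intro hc T cov
    rcases cov _ (Finset.mem_insert_self _ _) with hT | ⟨G, hG0, he, hGT⟩
    · have covp : Cover (insert (Form.subst A (Form.mu A)) Γ)
          (insert (Form.subst A (Form.mu A)) T) := by
        intro x hx
        rcases Finset.mem_insert.mp hx with rfl | hx
        · exact Or.inl (Finset.mem_insert_self _ _)
        · exact ((Cover.tail cov).mono (Finset.subset_insert _ _)) x hx
      exact (OmDerAux.clo false T A (ih1 hc _ covp)).cast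
        (Finset.insert_eq_self.mpr hT)
    · obtain ⟨G₁, rfl, hp1⟩ := prime_eq_mu he.symm
      have hsub_eq : Form.subst A (Form.mu A) =
          prime (Form.subst G₁ (Form.mu G₁)) := by
        rw [prime_subst, show prime (Form.mu G₁) = Form.mu (prime G₁) from rfl, hp1]
      have covp : Cover (insert (Form.subst A (Form.mu A)) Γ)
          (insert (Form.subst G₁ (Form.mu G₁)) T) := by
        intro x hx
        rcases Finset.mem_insert.mp hx with rfl | hx
        · exact Or.inr ⟨Form.subst G₁ (Form.mu G₁), isL0_subst _ _ hG0 hG0,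
            hsub_eq, Finset.mem_insert_self _ _⟩
        · exact ((Cover.tail cov).mono (Finset.subset_insert _ _)) x hx
      exact (OmDerAux.clo false T G₁ (ih1 hc _ covp)).cast
        (Finset.insert_eq_self.mpr hGT)
  | nuR c Γ A hp ihp =>
    intro hc T cov
    rcases cov _ (Finset.mem_insert_self _ _) with hT | ⟨G, hG0, he, hGT⟩
    · have covp : ∀ i : ℕ, Cover (insert (Form.iter A i) Γ)
          (insert (Form.iter A i) T) := by
        intro i x hx
        rcases Finset.mem_insert.mp hx with rfl | hx
        · exact Or.inl (Finset.mem_insert_self _ _)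
        · exact ((Cover.tail cov).mono (Finset.subset_insert _ _)) x hx
      exact (OmDerAux.nuR false T A (fun i => ihp i hc _ (covp i))).cast
        (Finset.insert_eq_self.mpr hT)
    · exact (prime_eq_nu he.symm).elim
  | cut Γ A hA hcl hlev d1 d2 ih1 ih2 =>
    intro hc
    exact Bool.noConfusion hc
  | omega c Γ A h h1 h2 hA hl hp ihp =>
    intro hc T cov
    have hmu : h = lev (Form.mu A) := by rw [← hl, lev_prime, lev_compl]
    have h1' : 1 ≤ lev (Form.mu A) := by rw [← hmu]; exact h1
    have h2' : lev (Form.mu A) ≤ m := by rw [← hmu]; exact h2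
    rcases cov _ (Finset.mem_insert_self _ _) with hT | ⟨G, hG0, he, hGT⟩
    · refine (OmDerAux.omega false T A h h1 (le_trans h2 (Nat.le_succ m)) hA hl
        ?_).cast (Finset.insert_eq_self.mpr hT)
      intro Δ hcl hpos d'
      have hpos' : Positive (lev (Form.mu A)) Δ := by rw [← hmu]; exact hpos
      have hprev := O1 A Δ hA h1' h2' hcl hpos' d'
      refine ihp Δ hcl hpos hprev hc (Δ ∪ T) ?_
      intro x hx
      rcases Finset.mem_union.mp hx with hx | hx
      · exact Or.inl (Finset.mem_union.mpr (Or.inl hx))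
      · exact ((Cover.tail cov).mono
          (fun y hy => Finset.mem_union.mpr (Or.inr hy))) x hx
    · obtain ⟨G₁, rfl, hp1⟩ := prime_eq_nut hG0
        (show prime G = Form.nut (prime (Form.compl A)) from he.symm)
      have hG1 : G₁ = Form.compl A := prime_inj hG0 (isL0_compl A hA) hp1
      subst hG1
      refine (OmDerAux.nuR false T (Form.compl A) ?_).cast
        (Finset.insert_eq_self.mpr hGT)
      intro i
      have hclosed : ClosedSeq ({prime (Form.iter (Form.compl A) i)} : Sequent) := by
        intro x hx
        rw [Finset.mem_singleton] at hx; subst hx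
        exact closed_prime _ (closed_iter _ _)
      have hpos : Positive h ({prime (Form.iter (Form.compl A) i)} : Sequent) := by
        intro x hx B hB
        rw [Finset.mem_singleton] at hx; subst hx
        have hle := occurs_nut_prime (isL0_iter _ (isL0_compl A hA) i) hB
        have h3 := lev_iter (Form.compl A) i
        have h4 : lev (Form.compl A) = lev A := lev_compl A
        have h5 : lev (Form.mu A) = lev A + 1 := rfl
        omega
      have hprev := O2 A i hA h1' h2'
      refine ihp _ hclosed hpos hprev hc (insert (Form.iter (Form.compl A) i) T) ?_
      intro x hx
      rcases Finset.mem_union.mp hx with hx | hx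
      · rw [Finset.mem_singleton] at hx; subst hx
        exact Or.inr ⟨Form.iter (Form.compl A) i, isL0_iter _ (isL0_compl A hA) i,
          rfl, Finset.mem_insert_self _ _⟩
      · exact ((Cover.tail cov).mono (Finset.subset_insert _ _)) x hx
  | omegaT c Γ A h h1 h2 hA hl d1 hp ih1 ihp =>
    intro hc T cov
    have hmu : h = lev (Form.mu A) := by rw [← hl, lev_prime, lev_compl]
    refine OmDerAux.omegaT false T A h h1 (le_trans h2 (Nat.le_succ m)) hA hl ?_ ?_
    · refine ih1 hc (insert (prime (Form.mu A)) T) ?_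
      intro x hx
      rcases Finset.mem_insert.mp hx with rfl | hx
      · exact Or.inl (Finset.mem_insert_self _ _)
      · exact (cov.mono (Finset.subset_insert _ _)) x hx
    · intro Δ hcl hpos d'
      have hpos' : Positive (lev (Form.mu A)) Δ := by rw [← hmu]; exact hpos
      have hprev := O1 A Δ hA (by rw [← hmu]; exact h1) (by rw [← hmu]; exact h2)
        hcl hpos' d'
      refine ihp Δ hcl hpos hprev hc (Δ ∪ T) ?_
      intro x hx
      rcases Finset.mem_union.mp hx with hx | hx
      · exact Or.inl (Finset.mem_union.mpr (Or.inl hx))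
      · exact (cov.mono (fun y hy => Finset.mem_union.mpr (Or.inr hy))) x hx




theorem OmProv_pair_and {n : ℕ} {Γ : Sequent} {A₁ A₂ B₁ B₂ : Form}
    (h₁ : ∀ Δ : Sequent, OmProv n false (insert A₁ (insert B₁ Δ)))
    (h₂ : ∀ Δ : Sequent, OmProv n false (insert A₂ (insert B₂ Δ))) :
    OmProv n false (insert (Form.and A₁ A₂) (insert (Form.or B₁ B₂) Γ)) := by
  have b1 : OmProv n false (insert A₁ (insert (Form.or B₁ B₂) Γ)) := by
    have s1 : OmProv n false (insert B₁ (insert B₂ (insert A₁ Γ))) :=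
      OmProv_cast (h₁ (insert B₂ Γ)) (by ext x; simp; try tauto)
    exact OmProv_cast (OmProv_orR s1) (by ext x; simp; try tauto)
  have b2 : OmProv n false (insert A₂ (insert (Form.or B₁ B₂) Γ)) := by
    have s2 : OmProv n false (insert B₁ (insert B₂ (insert A₂ Γ))) :=
      OmProv_cast (h₂ (insert B₁ Γ)) (by ext x; simp; try tauto)
    exact OmProv_cast (OmProv_orR s2) (by ext x; simp; try tauto)
  exact OmProv_andR b1 b2

theorem OmProv_pair_or {n : ℕ} {Γ : Sequent} {A₁ A₂ B₁ B₂ : Form}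
    (h₁ : ∀ Δ : Sequent, OmProv n false (insert A₁ (insert B₁ Δ)))
    (h₂ : ∀ Δ : Sequent, OmProv n false (insert A₂ (insert B₂ Δ))) :
    OmProv n false (insert (Form.or A₁ A₂) (insert (Form.and B₁ B₂) Γ)) := by
  have b1 : OmProv n false (insert B₁ (insert (Form.or A₁ A₂) Γ)) := by
    have s1 : OmProv n false (insert A₁ (insert A₂ (insert B₁ Γ))) :=
      OmProv_cast (h₁ (insert A₂ Γ)) (by ext x; simp; try tauto)
    exact OmProv_cast (OmProv_orR s1) (by ext x; simp; try tauto)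
  have b2 : OmProv n false (insert B₂ (insert (Form.or A₁ A₂) Γ)) := by
    have s2 : OmProv n false (insert A₁ (insert A₂ (insert B₂ Γ))) :=
      OmProv_cast (h₂ (insert A₁ Γ)) (by ext x; simp; try tauto)
    exact OmProv_cast (OmProv_orR s2) (by ext x; simp; try tauto)
  exact OmProv_cast (OmProv_andR b1 b2) (by ext x; simp; try tauto)

theorem OmProv_pair_box {n : ℕ} {Γ : Sequent} {A B : Form}
    (h : OmProv n false (insert A (insert B (∅ : Sequent)))) :
    OmProv n false (insert (Form.box A) (insert (Form.dia B) Γ)) := by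
  have h' : OmProv n false (insert A ({B} : Sequent)) :=
    OmProv_cast h (by ext x; simp)
  exact OmProv_cast (OmProv_boxR (Γ := ({B} : Sequent)) Γ h')
    (by ext x; simp; try tauto)

theorem OmProv_pair_dia {n : ℕ} {Γ : Sequent} {A B : Form}
    (h : OmProv n false (insert A (insert B (∅ : Sequent)))) :
    OmProv n false (insert (Form.dia A) (insert (Form.box B) Γ)) := by
  have h' : OmProv n false (insert B ({A} : Sequent)) :=
    OmProv_cast h (by ext x; simp; try tauto)
  exact OmProv_cast (OmProv_boxR (Γ := ({A} : Sequent)) Γ h')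
    (by ext x; simp; try tauto)

/-- Pushing a derivation one level down (for suitably bounded sequents). -/
theorem down_aux {n : ℕ}
    (HE : ∀ j, j + 1 = n → ∀ X : Sequent, OmProv j false X → OmProv n false X) :
    ∀ {c : Bool} {X : Sequent}, OmDerAux (OmProv n false) (n + 1) c X →
      c = false → ClosedSeq X → BndSeq n X → OmProv n false X := by
  intro c X d
  induction d with
  | ax c Γ i => intro _ _ _; exact OmProv_ax n Γ i
  | orR c Γ A B d1 ih1 =>
    intro hc hcl hbnd
    rw [closedSeq_insert] at hcl
    rw [bndSeq_insert] at hbnd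
    have hAB : ClosedF A ∧ ClosedF B := hcl.1
    refine OmProv_orR (ih1 hc ?_ ?_)
    · rw [closedSeq_insert, closedSeq_insert]; exact ⟨hAB.1, hAB.2, hcl.2⟩
    · rw [bndSeq_insert, bndSeq_insert]
      exact ⟨fun B' hB' => hbnd.1 B' (Or.inr (Or.inl hB')),
             fun B' hB' => hbnd.1 B' (Or.inr (Or.inr hB')), hbnd.2⟩
  | andR c Γ A B d1 d2 ih1 ih2 =>
    intro hc hcl hbnd
    rw [closedSeq_insert] at hcl
    rw [bndSeq_insert] at hbnd
    have hAB : ClosedF A ∧ ClosedF B := hcl.1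
    refine OmProv_andR (ih1 hc ?_ ?_) (ih2 hc ?_ ?_)
    · rw [closedSeq_insert]; exact ⟨hAB.1, hcl.2⟩
    · rw [bndSeq_insert]
      exact ⟨fun B' hB' => hbnd.1 B' (Or.inr (Or.inl hB')), hbnd.2⟩
    · rw [closedSeq_insert]; exact ⟨hAB.2, hcl.2⟩
    · rw [bndSeq_insert]
      exact ⟨fun B' hB' => hbnd.1 B' (Or.inr (Or.inr hB')), hbnd.2⟩
  | boxR c Γ Sx A d1 ih1 =>
    intro hc hcl hbnd
    have hA0 : ClosedF (Form.box A) :=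
      hcl (Form.box A) (Finset.mem_union_right _ (Finset.mem_insert_self _ _))
    have hbox_bnd : ∀ B', OccursIn (Form.nut B') A → lev (Form.nut B') ≤ n := by
      intro B' hB'
      exact hbnd (Form.box A)
        (Finset.mem_union_right _ (Finset.mem_insert_self _ _)) B' (Or.inr hB')
    refine OmProv_boxR Sx (ih1 hc ?_ ?_)
    · rw [closedSeq_insert]
      refine ⟨hA0, ?_⟩
      intro x hx
      have h1 : ClosedF (Form.dia x) :=
        hcl (Form.dia x) (Finset.mem_union_left _ (Finset.mem_image_of_mem Form.dia hx))
      exact h1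
    · rw [bndSeq_insert]
      refine ⟨hbox_bnd, ?_⟩
      intro x hx B' hB'
      exact hbnd (Form.dia x)
        (Finset.mem_union_left _ (Finset.mem_image_of_mem Form.dia hx)) B' (Or.inr hB')
  | clo c Γ A d1 ih1 =>
    intro hc hcl hbnd
    rw [closedSeq_insert] at hcl
    rw [bndSeq_insert] at hbnd
    refine OmProv_clo (ih1 hc ?_ ?_)
    · rw [closedSeq_insert]
      exact ⟨closed_subst _ _ True.intro, hcl.2⟩
    · rw [bndSeq_insert]
      refine ⟨?_, hbnd.2⟩
      intro B' hB'
      rcases occurs_nut_subst hB' with h | h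
      · exact hbnd.1 B' (Or.inr h)
      · exact hbnd.1 B' h
  | nuR c Γ A hp ihp =>
    intro hc hcl hbnd
    rw [closedSeq_insert] at hcl
    rw [bndSeq_insert] at hbnd
    refine OmProv_nuR (fun i => ihp i hc ?_ ?_)
    · rw [closedSeq_insert]; exact ⟨closed_iter _ _, hcl.2⟩
    · rw [bndSeq_insert]
      exact ⟨fun B' hB' => hbnd.1 B' (Or.inr (occurs_nut_iter hB')), hbnd.2⟩
  | cut Γ A hA hclA hlev d1 d2 ih1 ih2 =>
    intro hc
    exact Bool.noConfusion hc
  | omega c Γ A h h1 h2 hA hl hp ihp =>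
    intro hc hcl hbnd
    rw [closedSeq_insert] at hcl
    rw [bndSeq_insert] at hbnd
    have hocc := hbnd.1 (prime (Form.compl A)) (Or.inl rfl)
    rw [show Form.nut (prime (Form.compl A)) = prime (Form.compl (Form.mu A))
      from rfl] at hocc
    have hh : h ≤ n := by omega
    obtain ⟨j, rfl⟩ : ∃ j, n = j + 1 := ⟨n - 1, by omega⟩
    show OmDerAux (OmProv j false) (j + 1) false _
    refine OmDerAux.omega false Γ A h h1 hh hA hl ?_
    intro Δ hcl' hpos d'
    have d'' : OmProv (j + 1) false (insert (prime (Form.mu A)) Δ) := HE j rfl _ d'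
    refine ihp Δ hcl' hpos d'' hc ?_ ?_
    · rw [closedSeq_union]; exact ⟨hcl', hcl.2⟩
    · rw [bndSeq_union]
      refine ⟨?_, hbnd.2⟩
      intro x hx B' hB'
      have := hpos x hx B' hB'
      omega
  | omegaT c Γ A h h1 h2 hA hl d1 hp ih1 ihp =>
    intro hc hcl hbnd
    have hlevA : lev (Form.mu A) = h := by rw [← hl, lev_prime, lev_compl]
    have h5 : lev (Form.mu A) = lev A + 1 := rfl
    have hclih : ClosedSeq (insert (prime (Form.mu A)) Γ) := by
      rw [closedSeq_insert]; exact ⟨True.intro, hcl⟩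
    have hbndih : BndSeq n (insert (prime (Form.mu A)) Γ) := by
      rw [bndSeq_insert]
      refine ⟨?_, hbnd⟩
      intro B' hB'
      have hB2 : Form.nut B' = Form.mu (prime A) ∨ OccursIn (Form.nut B') (prime A) := hB'
      rcases hB2 with he | ho
      · exact absurd he (by simp)
      · have := occurs_nut_prime hA ho
        omega
    by_cases hh : h ≤ n
    · obtain ⟨j, rfl⟩ : ∃ j, n = j + 1 := ⟨n - 1, by omega⟩
      show OmDerAux (OmProv j false) (j + 1) false Γ
      refine OmDerAux.omegaT false Γ A h h1 hh hA hl (ih1 hc hclih hbndih) ?_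
      intro Δ hcl' hpos d'
      have d'' := HE j rfl _ d'
      refine ihp Δ hcl' hpos d'' hc ?_ ?_
      · rw [closedSeq_union]; exact ⟨hcl', hcl⟩
      · rw [bndSeq_union]
        refine ⟨?_, hbnd⟩
        intro x hx B' hB'
        have := hpos x hx B' hB'
        omega
    · have hEq : h = n + 1 := by omega
      have pre := ih1 hc hclih hbndih
      have hpos : Positive h Γ := by
        intro x hx B' hB'
        have := hbnd x hx B' hB'
        omega
      have hres := ihp Γ hcl hpos pre hc
        (by rw [closedSeq_union]; exact ⟨hcl, hcl⟩)
        (by rw [bndSeq_union]; exact ⟨hbnd, hbnd⟩)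
      rwa [Finset.union_self] at hres

def DOWNstmt (n : ℕ) : Prop :=
  ∀ X : Sequent, ClosedSeq X → BndSeq n X →
    OmProv (n + 1) false X → OmProv n false X

def EMBstmt (n : ℕ) : Prop := ∀ X : Sequent, OmProv n false X → OmProv (n + 1) false X

def IDPstmt (n : ℕ) : Prop := ∀ D : Form, IsL0 D → ClosedF D → lev D ≤ n →
  ∀ Γ : Sequent, OmProv n false (insert (prime D) (insert (prime (Form.compl D)) Γ))

def ID2stmt (n : ℕ) : Prop := ∀ C : Form, IsL0 C → lev C ≤ n →
  ∀ P Q : Form, (∀ Δ' : Sequent, OmProv n false (insert P (insert Q Δ'))) →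
  ∀ Γ : Sequent, OmProv n false (insert (Form.subst (prime C) P)
    (insert (Form.subst (prime (Form.compl C)) Q) Γ))

def IDITERstmt (n : ℕ) : Prop := ∀ C : Form, IsL0 C → lev C ≤ n →
  ∀ (i : ℕ) (Γ : Sequent), OmProv n false (insert (prime (Form.mu C))
    (insert (prime (Form.iter (Form.compl C) i)) Γ))

def PKG (n : ℕ) : Prop :=
  DOWNstmt n ∧ EMBstmt n ∧ IDPstmt n ∧ ID2stmt n ∧ IDITERstmt n

theorem pkg : ∀ n, PKG n := by
  intro n
  induction n using Nat.strong_induction_on with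
  | _ n IH =>
  have hdown : DOWNstmt n := by
    intro X hcl hbnd d
    refine down_aux (fun j hj X' d' => ?_) d rfl hcl hbnd
    have := (IH j (by omega)).2.1 X' d'
    rwa [hj] at this
  have hemb : EMBstmt n := by
    intro X d
    cases n with
    | zero =>
      refine trans_aux ?_ ?_ d rfl X (Cover.id X)
      · intro C Δ' _ h1 h2 _ _ _; exact absurd h2 (by omega)
      · intro C i _ h1 h2; exact absurd h2 (by omega)
    | succ j =>
      refine trans_aux ?_ ?_ d rfl X (Cover.id X)
      · intro C Δ' hC h1 h2 hcl hpos d'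
        refine (IH j (by omega)).1 _ ?_ ?_ d'
        · rw [closedSeq_insert]; exact ⟨True.intro, hcl⟩
        · rw [bndSeq_insert]
          constructor
          · intro B' hB'
            have hB2 : Form.nut B' = Form.mu (prime C) ∨
                OccursIn (Form.nut B') (prime C) := hB'
            rcases hB2 with he | ho
            · exact absurd he (by simp)
            · have := occurs_nut_prime hC ho
              have h5 : lev (Form.mu C) = lev C + 1 := rfl
              omega
          · intro x hx B' hB'
            have := hpos x hx B' hB'
            omega
      · intro C i hC h1 h2
        have h5 : lev (Form.mu C) = lev C + 1 := rfl
        have := (IH j (by omega)).2.2.2.2 C hC (by omega) i ∅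
        exact OmProv_cast this (by ext x; simp)
  have hidp : IDPstmt n := by
    intro D
    induction D with
    | atom i => intro _ _ _ Γ; exact OmProv_ax n Γ i
    | natom i =>
      intro _ _ _ Γ
      exact OmProv_cast (OmProv_ax n Γ i) (Finset.insert_comm _ _ _)
    | var => intro _ hcl _ _; exact (hcl : False).elim
    | and D₁ D₂ ih₁ ih₂ =>
      intro hL hcl hlev Γ
      have hL' : IsL0 D₁ ∧ IsL0 D₂ := hL
      have hcl' : ClosedF D₁ ∧ ClosedF D₂ := hcl
      have hlev' : lev D₁ ≤ n ∧ lev D₂ ≤ n := by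
        have : lev (Form.and D₁ D₂) = max (lev D₁) (lev D₂) := rfl
        omega
      show OmProv n false (insert (Form.and (prime D₁) (prime D₂))
        (insert (Form.or (prime (Form.compl D₁)) (prime (Form.compl D₂))) Γ))
      exact OmProv_pair_and (fun Δ => ih₁ hL'.1 hcl'.1 hlev'.1 Δ)
        (fun Δ => ih₂ hL'.2 hcl'.2 hlev'.2 Δ)
    | or D₁ D₂ ih₁ ih₂ =>
      intro hL hcl hlev Γ
      have hL' : IsL0 D₁ ∧ IsL0 D₂ := hL
      have hcl' : ClosedF D₁ ∧ ClosedF D₂ := hcl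
      have hlev' : lev D₁ ≤ n ∧ lev D₂ ≤ n := by
        have : lev (Form.or D₁ D₂) = max (lev D₁) (lev D₂) := rfl
        omega
      show OmProv n false (insert (Form.or (prime D₁) (prime D₂))
        (insert (Form.and (prime (Form.compl D₁)) (prime (Form.compl D₂))) Γ))
      exact OmProv_pair_or (fun Δ => ih₁ hL'.1 hcl'.1 hlev'.1 Δ)
        (fun Δ => ih₂ hL'.2 hcl'.2 hlev'.2 Δ)
    | box D₁ ih =>
      intro hL hcl hlev Γ
      show OmProv n false (insert (Form.box (prime D₁))
        (insert (Form.dia (prime (Form.compl D₁))) Γ))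
      exact OmProv_pair_box (ih hL hcl hlev ∅)
    | dia D₁ ih =>
      intro hL hcl hlev Γ
      show OmProv n false (insert (Form.dia (prime D₁))
        (insert (Form.box (prime (Form.compl D₁))) Γ))
      exact OmProv_pair_dia (ih hL hcl hlev ∅)
    | mu D₁ ih =>
      intro hL hcl hlev Γ
      have h5 : lev (Form.mu D₁) = lev D₁ + 1 := rfl
      obtain ⟨j, rfl⟩ : ∃ j, n = j + 1 := ⟨n - 1, by omega⟩
      show OmDerAux (OmProv j false) (j + 1) false
        (insert (prime (Form.mu D₁)) (insert (prime (Form.compl (Form.mu D₁))) Γ))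
      rw [Finset.insert_comm]
      refine OmDerAux.omega false (insert (prime (Form.mu D₁)) Γ) D₁
        (lev (Form.mu D₁)) (by omega) (by omega) hL
        (by rw [lev_prime, lev_compl]) ?_
      intro Δ _ _ d'
      have d2 := (IH j (by omega)).2.1 _ d'
      refine OmProv_weak d2 ?_
      intro x hx
      rcases Finset.mem_insert.mp hx with rfl | hx
      · exact Finset.mem_union.mpr (Or.inr (Finset.mem_insert_self _ _))
      · exact Finset.mem_union.mpr (Or.inl hx)
    | nu D₁ ih =>
      intro hL hcl hlev Γ
      have h5 : lev (Form.nu D₁) = lev D₁ + 1 := rfl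
      obtain ⟨j, rfl⟩ : ∃ j, n = j + 1 := ⟨n - 1, by omega⟩
      show OmDerAux (OmProv j false) (j + 1) false
        (insert (Form.nut (prime D₁)) (insert (Form.mu (prime (Form.compl D₁))) Γ))
      have hkey : prime (Form.compl (Form.mu (Form.compl D₁))) = Form.nut (prime D₁) := by
        show Form.nut (prime (Form.compl (Form.compl D₁))) = Form.nut (prime D₁)
        rw [compl_compl D₁ hL]
      rw [← hkey]
      refine OmDerAux.omega false (insert (Form.mu (prime (Form.compl D₁))) Γ)
        (Form.compl D₁) (lev D₁ + 1) (show 1 ≤ lev D₁ + 1 by omega)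
        (show lev D₁ + 1 ≤ j + 1 by omega) (isL0_compl D₁ hL) ?_ ?_
      · rw [lev_prime, lev_compl]
        show lev (Form.compl D₁) + 1 = lev D₁ + 1
        rw [lev_compl]
      · intro Δ _ _ d'
        have d2 := (IH j (by omega)).2.1 _ d'
        refine OmProv_weak d2 ?_
        intro x hx
        rcases Finset.mem_insert.mp hx with rfl | hx
        · exact Finset.mem_union.mpr (Or.inr (Finset.mem_insert_self _ _))
        · exact Finset.mem_union.mpr (Or.inl hx)
    | nut D₁ ih => intro hL; exact (hL : False).elim
  have hid2 : ID2stmt n := by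
    intro C
    induction C with
    | atom i =>
      intro _ _ P Q H Γ
      show OmProv n false (insert (Form.atom i) (insert (Form.natom i) Γ))
      exact OmProv_ax n Γ i
    | natom i =>
      intro _ _ P Q H Γ
      show OmProv n false (insert (Form.natom i) (insert (Form.atom i) Γ))
      exact OmProv_cast (OmProv_ax n Γ i) (Finset.insert_comm _ _ _)
    | var =>
      intro _ _ P Q H Γ
      exact H Γ
    | and C₁ C₂ ih₁ ih₂ =>
      intro hL hlev P Q H Γ
      have hL' : IsL0 C₁ ∧ IsL0 C₂ := hL
      have hlev' : lev C₁ ≤ n ∧ lev C₂ ≤ n := by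
        have : lev (Form.and C₁ C₂) = max (lev C₁) (lev C₂) := rfl
        omega
      show OmProv n false (insert (Form.and (Form.subst (prime C₁) P)
          (Form.subst (prime C₂) P))
        (insert (Form.or (Form.subst (prime (Form.compl C₁)) Q)
          (Form.subst (prime (Form.compl C₂)) Q)) Γ))
      exact OmProv_pair_and (fun Δ => ih₁ hL'.1 hlev'.1 P Q H Δ)
        (fun Δ => ih₂ hL'.2 hlev'.2 P Q H Δ)
    | or C₁ C₂ ih₁ ih₂ =>
      intro hL hlev P Q H Γ
      have hL' : IsL0 C₁ ∧ IsL0 C₂ := hL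
      have hlev' : lev C₁ ≤ n ∧ lev C₂ ≤ n := by
        have : lev (Form.or C₁ C₂) = max (lev C₁) (lev C₂) := rfl
        omega
      show OmProv n false (insert (Form.or (Form.subst (prime C₁) P)
          (Form.subst (prime C₂) P))
        (insert (Form.and (Form.subst (prime (Form.compl C₁)) Q)
          (Form.subst (prime (Form.compl C₂)) Q)) Γ))
      exact OmProv_pair_or (fun Δ => ih₁ hL'.1 hlev'.1 P Q H Δ)
        (fun Δ => ih₂ hL'.2 hlev'.2 P Q H Δ)
    | box C₁ ih =>
      intro hL hlev P Q H Γ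
      show OmProv n false (insert (Form.box (Form.subst (prime C₁) P))
        (insert (Form.dia (Form.subst (prime (Form.compl C₁)) Q)) Γ))
      exact OmProv_pair_box (ih hL hlev P Q H ∅)
    | dia C₁ ih =>
      intro hL hlev P Q H Γ
      show OmProv n false (insert (Form.dia (Form.subst (prime C₁) P))
        (insert (Form.box (Form.subst (prime (Form.compl C₁)) Q)) Γ))
      exact OmProv_pair_dia (ih hL hlev P Q H ∅)
    | mu C₁ ih =>
      intro hL hlev P Q H Γ
      exact hidp (Form.mu C₁) hL True.intro hlev Γ
    | nu C₁ ih =>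
      intro hL hlev P Q H Γ
      exact hidp (Form.nu C₁) hL True.intro hlev Γ
    | nut C₁ ih => intro hL; exact (hL : False).elim
  have hiditer : IDITERstmt n := by
    intro C hC hlev i
    induction i with
    | zero =>
      intro Γ
      show OmProv n false (insert (prime (Form.mu C))
        (insert (Form.or (Form.atom 0) (Form.natom 0)) Γ))
      refine OmProv_cast (OmProv_orR ?_) (Finset.insert_comm _ _ _)
      exact OmProv_ax n _ 0
    | succ i ihx =>
      intro Γ
      show OmProv n false (insert (Form.mu (prime C))
        (insert (prime (Form.iter (Form.compl C) (i + 1))) Γ))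
      refine OmProv_clo ?_
      have he : prime (Form.iter (Form.compl C) (i + 1)) =
          Form.subst (prime (Form.compl C)) (prime (Form.iter (Form.compl C) i)) := by
        show prime (Form.subst (Form.compl C) (Form.iter (Form.compl C) i)) = _
        rw [prime_subst]
      rw [he]
      exact hid2 C hC hlev (Form.mu (prime C)) (prime (Form.iter (Form.compl C) i))
        (fun Δ' => ihx Δ') Γ
  exact ⟨hdown, hemb, hidp, hid2, hiditer⟩

/-- Transfer along a covering, one level up. -/
theorem trans_prov (m : ℕ) {X T : Sequent} (d : OmProv m false X)
    (cov : Cover X T) : OmProv (m + 1) false T := by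
  cases m with
  | zero =>
    refine trans_aux ?_ ?_ d rfl T cov
    · intro C Δ' _ h1 h2 _ _ _; exact absurd h2 (by omega)
    · intro C i _ h1 h2; exact absurd h2 (by omega)
  | succ j =>
    refine trans_aux ?_ ?_ d rfl T cov
    · intro C Δ' hC h1 h2 hcl hpos d'
      refine (pkg j).1 _ ?_ ?_ d'
      · rw [closedSeq_insert]; exact ⟨True.intro, hcl⟩
      · rw [bndSeq_insert]
        constructor
        · intro B' hB'
          have hB2 : Form.nut B' = Form.mu (prime C) ∨
              OccursIn (Form.nut B') (prime C) := hB'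
          rcases hB2 with he | ho
          · exact absurd he (by simp)
          · have := occurs_nut_prime hC ho
            have h5 : lev (Form.mu C) = lev C + 1 := rfl
            omega
        · intro x hx B' hB'
          have := hpos x hx B' hB'
          omega
    · intro C i hC h1 h2
      have h5 : lev (Form.mu C) = lev C + 1 := rfl
      have := (pkg j).2.2.2.2 C hC (by omega) i ∅
      exact OmProv_cast this (by ext x; simp)


/-- for `h ≤ k`, if `μX.A` is a formula of `L0` with `lev(μX.A) = h`,
then `μX.A, (¬μX.A)ʹ` has a cut-free derivation in `M^Ω_k`. -/
theorem stmt3 (h k : ℕ) (hhk : h ≤ k) (A : Form)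
    (hA : Form.IsL0 (Form.mu A)) (hlev : Form.lev (Form.mu A) = h) :
    OmProv k false {Form.mu A, Form.prime (Form.compl (Form.mu A))} := by
  have h5 : Form.lev A + 1 = h := by
    have : Form.lev (Form.mu A) = Form.lev A + 1 := rfl
    omega
  cases k with
  | zero => exact absurd h5 (by omega)
  | succ k' =>
    show OmDerAux (OmProv k' false) (k' + 1) false _
    have hset : ({Form.mu A, Form.prime (Form.compl (Form.mu A))} : Sequent)
        = insert (Form.prime (Form.compl (Form.mu A))) {Form.mu A} := by
      ext x; simp; tauto
    rw [hset]
    refine OmDerAux.omega false {Form.mu A} A h (by omega) hhk hA ?_ ?_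
    · rw [Form.lev_prime, Form.lev_compl]; exact hlev
    · intro Δ hcl hpos d
      refine trans_prov k' d ?_
      intro x hx
      rcases Finset.mem_insert.mp hx with rfl | hx
      · exact Or.inr ⟨Form.mu A, hA, rfl,
          Finset.mem_union.mpr (Or.inr (Finset.mem_singleton_self _))⟩
      · exact Or.inl (Finset.mem_union.mpr (Or.inl hx))

end OneVarMu
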